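/- Let ℓ ∈ M, K = M ∖ {ℓ}, and fix μ ∈ ℝ^K; let ϱ = (c_K(μ))_ℓ, and for r ∈ ℝ let τ(r) ∈ ℝ^M be the vector agreeing with μ on K and with τ(r)_ℓ = r. Let r0 ≥ ϱ, set x0 = c_M(τ(r0)) and a0 = v(x0). Then (x0)_ℓ = r0, and x0 is the efficient point at these levels in the constraint subspace h(μ): (x0)_ℓ = max{x_ℓ : x ∈ h(μ), v(x) ≤ a0} and v(x0) = min{v(x) : x ∈ h(μ), x_ℓ ≥ r0}. -/

import Mathlib

open Matrix

/-- with K = M ∖ {ℓ}, μ ∈ ℝ^K, ϱ = (c_K(μ))_ℓ, r0 ≥ ϱ,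
τ(r0) agreeing with μ on K and equal to r0 at ℓ, x0 = c_M(τ(r0)) and a0 = v(x0):
(x0)_ℓ = r0, (x0)_ℓ = max{x_ℓ : x ∈ h(μ), v(x) ≤ a0}, and
v(x0) = min{v(x) : x ∈ h(μ), x_ℓ ≥ r0}. -/
theorem markowitz_efficient_portfolio {n : ℕ} (hn : 0 < n)
    (Q : Matrix (Fin n) (Fin n) ℝ) (hQ : Q.PosDef)
    (M : Finset (Fin n)) (hM : M ≠ Finset.univ)
    (ℓ : Fin n) (hℓ : ℓ ∈ M)
    (μ : Fin n → ℝ)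
    (cK : Fin n → ℝ)
    (hcK1 : ∀ j ∈ M.erase ℓ, cK j = μ j)
    (hcK2 : ∀ i ∉ M.erase ℓ, Q.mulVec cK i = 0)
    (r0 : ℝ) (hr0 : cK ℓ ≤ r0)
    (x0 : Fin n → ℝ)
    (hx01 : ∀ j ∈ M, x0 j = Function.update μ ℓ r0 j)
    (hx02 : ∀ i ∉ M, Q.mulVec x0 i = 0) :
    x0 ℓ = r0 ∧
    IsGreatest {t : ℝ | ∃ x : Fin n → ℝ, (∀ j ∈ M.erase ℓ, x j = μ j) ∧
        x ⬝ᵥ Q.mulVec x ≤ x0 ⬝ᵥ Q.mulVec x0 ∧ t = x ℓ} (x0 ℓ) ∧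
    IsLeast {t : ℝ | ∃ x : Fin n → ℝ, (∀ j ∈ M.erase ℓ, x j = μ j) ∧
        r0 ≤ x ℓ ∧ t = x ⬝ᵥ Q.mulVec x} (x0 ⬝ᵥ Q.mulVec x0) := by
  classical
  have hx0ℓ : x0 ℓ = r0 := by simpa using hx01 ℓ hℓ
  have hx0K : ∀ j ∈ M.erase ℓ, x0 j = μ j := by
    intro j hj
    have hjℓ : j ≠ ℓ := (Finset.mem_erase.mp hj).1
    have := hx01 j (Finset.mem_of_mem_erase hj)
    simpa [Function.update_of_ne hjℓ] using this
  -- transpose symmetry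
  have hQT : Qᵀ = Q := by
    ext i j
    have := congrFun (congrFun hQ.1 i) j
    simpa [Matrix.conjTranspose_apply] using this
  have hsymm : ∀ x y : Fin n → ℝ, x ⬝ᵥ Q.mulVec y = y ⬝ᵥ Q.mulVec x := by
    intro x y
    have h : x ᵥ* Q = Q *ᵥ x := by
      conv_rhs => rw [← hQT]
      exact (mulVec_transpose Q x).symm
    rw [dotProduct_mulVec, h, dotProduct_comm]
  -- nonnegativity and definiteness
  have hnn : ∀ y : Fin n → ℝ, 0 ≤ y ⬝ᵥ Q.mulVec y := by
    intro y
    by_cases hy : y = 0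
    · simp [hy]
    · have := hQ.dotProduct_mulVec_pos hy
      simp only [star_trivial] at this
      exact this.le
  have hzero : ∀ y : Fin n → ℝ, y ⬝ᵥ Q.mulVec y = 0 → y = 0 := by
    intro y hy
    by_contra h
    have := hQ.dotProduct_mulVec_pos h
    simp only [star_trivial] at this
    linarith
  -- expansion of quadratic form
  have expand : ∀ y z : Fin n → ℝ,
      (y + z) ⬝ᵥ Q.mulVec (y + z)
        = y ⬝ᵥ Q.mulVec y + 2 * (z ⬝ᵥ Q.mulVec y) + z ⬝ᵥ Q.mulVec z := by
    intro y z
    rw [Matrix.mulVec_add, dotProduct_add, add_dotProduct, add_dotProduct,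
      hsymm y z]
    ring
  set lam : ℝ := Q.mulVec x0 ℓ with hlam
  -- cross term with x0
  have hyx0 : ∀ y : Fin n → ℝ, (∀ j ∈ M.erase ℓ, y j = 0) →
      y ⬝ᵥ Q.mulVec x0 = y ℓ * lam := by
    intro y hy
    apply Finset.sum_eq_single_of_mem ℓ (Finset.mem_univ ℓ)
    intro i _ hiℓ
    by_cases hiM : i ∈ M
    · rw [hy i (Finset.mem_erase.mpr ⟨hiℓ, hiM⟩)]; ring
    · rw [hx02 i hiM]; ring
  -- cross term with cK
  have hycK : ∀ y : Fin n → ℝ, (∀ j ∈ M.erase ℓ, y j = 0) →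
      y ⬝ᵥ Q.mulVec cK = 0 := by
    intro y hy
    apply Finset.sum_eq_zero
    intro i _
    by_cases hiK : i ∈ M.erase ℓ
    · rw [hy i hiK]; ring
    · rw [hcK2 i hiK]; ring
  have hdiff0 : ∀ x z : Fin n → ℝ, (∀ j ∈ M.erase ℓ, x j = μ j) →
      (∀ j ∈ M.erase ℓ, z j = μ j) → ∀ j ∈ M.erase ℓ, (x - z) j = 0 := by
    intro x z hx hz j hj
    simp [hx j hj, hz j hj]
  -- key identity relative to x0
  have keyX : ∀ x : Fin n → ℝ, (∀ j ∈ M.erase ℓ, x j = μ j) →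
      x ⬝ᵥ Q.mulVec x = x0 ⬝ᵥ Q.mulVec x0 + 2 * ((x ℓ - r0) * lam)
        + (x - x0) ⬝ᵥ Q.mulVec (x - x0) := by
    intro x hx
    have hy := hdiff0 x x0 hx hx0K
    have h1 := hyx0 (x - x0) hy
    have h2 := expand x0 (x - x0)
    have hxx : x0 + (x - x0) = x := by ring
    rw [hxx] at h2
    have hℓ' : (x - x0) ℓ = x ℓ - r0 := by simp [hx0ℓ]
    rw [h1, hℓ'] at h2
    linarith
  -- key identity relative to cK
  have keyK : ∀ x : Fin n → ℝ, (∀ j ∈ M.erase ℓ, x j = μ j) →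
      x ⬝ᵥ Q.mulVec x = cK ⬝ᵥ Q.mulVec cK + (x - cK) ⬝ᵥ Q.mulVec (x - cK) := by
    intro x hx
    have hy := hdiff0 x cK hx hcK1
    have h1 := hycK (x - cK) hy
    have h2 := expand cK (x - cK)
    have hxx : cK + (x - cK) = x := by ring
    rw [hxx] at h2
    rw [h1] at h2
    linarith
  set w : Fin n → ℝ := x0 - cK with hw
  have hwK : x0 ⬝ᵥ Q.mulVec x0 = cK ⬝ᵥ Q.mulVec cK + w ⬝ᵥ Q.mulVec w :=
    keyK x0 hx0K
  have hcKX := keyX cK hcK1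
  have hcw : (cK - x0) ⬝ᵥ Q.mulVec (cK - x0) = w ⬝ᵥ Q.mulVec w := by
    have h : cK - x0 = -w := by simp [hw]
    rw [h, Matrix.mulVec_neg, dotProduct_neg, neg_dotProduct, neg_neg]
  rw [hcw] at hcKX
  -- (r0 - cK ℓ) * lam = v(w)
  have hlamw : (r0 - cK ℓ) * lam = w ⬝ᵥ Q.mulVec w := by nlinarith [hwK, hcKX]
  have hlam_nonneg : 0 ≤ lam := by
    by_contra h
    push_neg at h
    have h1 : (r0 - cK ℓ) * lam ≤ 0 := mul_nonpos_of_nonneg_of_nonpos (by linarith) h.le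
    have h2 : w ⬝ᵥ Q.mulVec w = 0 := le_antisymm (hlamw ▸ h1) (hnn w)
    have h3 : w = 0 := hzero w h2
    have h4 : x0 = cK := by
      funext i
      have := congrFun h3 i
      simpa [hw, sub_eq_zero] using this
    have h5 : lam = 0 := by
      rw [hlam, h4]
      exact hcK2 ℓ (Finset.notMem_erase ℓ M)
    linarith
  refine ⟨hx0ℓ, ⟨⟨x0, hx0K, le_refl _, rfl⟩, ?_⟩, ⟨⟨x0, hx0K, le_of_eq hx0ℓ.symm, rfl⟩, ?_⟩⟩
  · -- upper bound for IsGreatest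
    rintro t ⟨x, hx, hvx, rfl⟩
    rw [hx0ℓ]
    have hk := keyX x hx
    have hnnx := hnn (x - x0)
    rcases lt_or_eq_of_le hlam_nonneg with hpos | hlam0
    · nlinarith
    · -- lam = 0 : then w = 0, x0 = cK, r0 = cK ℓ
      have h2 : w ⬝ᵥ Q.mulVec w = 0 := by rw [← hlamw, ← hlam0]; ring
      have h3 : w = 0 := hzero w h2
      have h4 : x0 = cK := by
        funext i
        have := congrFun h3 i
        simpa [hw, sub_eq_zero] using this
      have hr0eq : r0 = cK ℓ := by rw [← hx0ℓ, h4]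
      have hkK := keyK x hx
      have hvcx : (x - cK) ⬝ᵥ Q.mulVec (x - cK) = 0 := by
        have : x0 ⬝ᵥ Q.mulVec x0 = cK ⬝ᵥ Q.mulVec cK := by rw [h4]
        have := hnn (x - cK)
        linarith [hvx, hkK, this]
      have hxcK : x = cK := by
        have := hzero _ hvcx
        funext i
        have := congrFun this i
        simpa [sub_eq_zero] using this
      rw [hxcK, hr0eq]
  · -- lower bound for IsLeast
    rintro t ⟨x, hx, hxℓ, rfl⟩
    have hk := keyX x hx
    have hnnx := hnn (x - x0)
    nlinarith
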